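/- Let A be a monoidal category and let (T, μ, η, ψ, ψ₀) be an opmonoidal monad on A. Then the following data form a skew left warping of A: the functor T; the object K = I; the natural family v_{A,B} = (μ_A⊗1_{TB})∘ψ_{TA,B} : T(TA⊗B) → TA⊗TB; the morphism v₀ = ψ₀ : TI → I; and the natural family k_A = ρ_{TA}∘η_A : A → TA⊗I. That is, the five skew left warping axioms (W1)–(W5) hold for this data. -/

import Mathlib

open CategoryTheory MonoidalCategory

variable {V : Type*} [Category V] [MonoidalCategory V]

/-- A skew left warping of the monoidal category `V` (Lack–Street, following Booker–Street):
a functor `T`, an object `K`, natural families `v_{X,Y} : T(TX ⊗ Y) ⟶ TX ⊗ TY` and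
`k_X : X ⟶ TX ⊗ K`, and a morphism `v₀ : TK ⟶ I`, satisfying the five warping axioms
(W1)–(W5). -/
def IsSkewLeftWarping (T : V ⥤ V) (K : V)
    (v : ∀ X Y : V, T.obj (T.obj X ⊗ Y) ⟶ T.obj X ⊗ T.obj Y)
    (v₀ : T.obj K ⟶ 𝟙_ V) (k : ∀ X : V, X ⟶ T.obj X ⊗ K) : Prop :=
  -- naturality of v
  (∀ (X X' Y Y' : V) (f : X ⟶ X') (g : Y ⟶ Y'),
    T.map (T.map f ⊗ₘ g) ≫ v X' Y' = v X Y ≫ (T.map f ⊗ₘ T.map g)) ∧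
  -- naturality of k
  (∀ (X X' : V) (f : X ⟶ X'), f ≫ k X' = k X ≫ (T.map f ▷ K)) ∧
  -- (W1)
  (∀ X Y Z : V,
    v (T.obj X ⊗ Y) Z ≫ (v X Y ▷ T.obj Z) ≫ (α_ (T.obj X) (T.obj Y) (T.obj Z)).hom =
      T.map (v X Y ▷ Z) ≫ T.map (α_ (T.obj X) (T.obj Y) Z).hom ≫
        v X (T.obj Y ⊗ Z) ≫ (T.obj X ◁ v Y Z)) ∧
  -- (W2)
  (∀ Y : V,
    v K Y ≫ (v₀ ▷ T.obj Y) ≫ (λ_ (T.obj Y)).hom =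
      T.map (v₀ ▷ Y) ≫ T.map (λ_ Y).hom) ∧
  -- (W3)
  (∀ X : V, T.map (k X) ≫ v X K ≫ (T.obj X ◁ v₀) = (ρ_ (T.obj X)).inv) ∧
  -- (W4)
  (∀ X Y : V,
    k (T.obj X ⊗ Y) ≫ (v X Y ▷ K) ≫ (α_ (T.obj X) (T.obj Y) K).hom =
      T.obj X ◁ k Y) ∧
  -- (W5)
  (k K ≫ (v₀ ▷ K) ≫ (λ_ K).hom = 𝟙 K)

/-- An opmonoidal monad on the monoidal category `V`: a monad `(T, μ, η)` together with an
opmonoidal structure `(ψ, ψ₀)` on `T` for which `μ` and `η` are opmonoidal natural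
transformations. -/
def IsOpmonoidalMonad (T : V ⥤ V)
    (μ : ∀ X : V, T.obj (T.obj X) ⟶ T.obj X) (η : ∀ X : V, X ⟶ T.obj X)
    (ψ : ∀ X Y : V, T.obj (X ⊗ Y) ⟶ T.obj X ⊗ T.obj Y)
    (ψ₀ : T.obj (𝟙_ V) ⟶ 𝟙_ V) : Prop :=
  -- naturality of μ and η
  (∀ (X Y : V) (f : X ⟶ Y), T.map (T.map f) ≫ μ Y = μ X ≫ T.map f) ∧
  (∀ (X Y : V) (f : X ⟶ Y), f ≫ η Y = η X ≫ T.map f) ∧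
  -- monad axioms
  (∀ X : V, μ (T.obj X) ≫ μ X = T.map (μ X) ≫ μ X) ∧
  (∀ X : V, η (T.obj X) ≫ μ X = 𝟙 (T.obj X)) ∧
  (∀ X : V, T.map (η X) ≫ μ X = 𝟙 (T.obj X)) ∧
  -- naturality of ψ
  (∀ (X X' Y Y' : V) (f : X ⟶ X') (g : Y ⟶ Y'),
    T.map (f ⊗ₘ g) ≫ ψ X' Y' = ψ X Y ≫ (T.map f ⊗ₘ T.map g)) ∧
  -- opmonoidal functor axioms: coassociativity and counitality of ψ
  (∀ X Y Z : V,
    T.map (α_ X Y Z).hom ≫ ψ X (Y ⊗ Z) ≫ (T.obj X ◁ ψ Y Z) =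
      ψ (X ⊗ Y) Z ≫ (ψ X Y ▷ T.obj Z) ≫ (α_ (T.obj X) (T.obj Y) (T.obj Z)).hom) ∧
  (∀ X : V, ψ (𝟙_ V) X ≫ (ψ₀ ▷ T.obj X) ≫ (λ_ (T.obj X)).hom = T.map (λ_ X).hom) ∧
  (∀ X : V, ψ X (𝟙_ V) ≫ (T.obj X ◁ ψ₀) ≫ (ρ_ (T.obj X)).hom = T.map (ρ_ X).hom) ∧
  -- μ is opmonoidal
  (∀ X Y : V,
    T.map (ψ X Y) ≫ ψ (T.obj X) (T.obj Y) ≫ (μ X ⊗ₘ μ Y) = μ (X ⊗ Y) ≫ ψ X Y) ∧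
  (T.map ψ₀ ≫ ψ₀ = μ (𝟙_ V) ≫ ψ₀) ∧
  -- η is opmonoidal
  (∀ X Y : V, η (X ⊗ Y) ≫ ψ X Y = η X ⊗ₘ η Y) ∧
  (η (𝟙_ V) ≫ ψ₀ = 𝟙 (𝟙_ V))

/-- An opmonoidal monad `(T, μ, η, ψ, ψ₀)` on a monoidal category `V`
determines a skew left warping of `V` with the same functor `T`, `K = I`,
`v_{X,Y} = (μ_X ⊗ 1_{TY}) ∘ ψ_{TX,Y}`, `v₀ = ψ₀` and `k_X = ρ_{TX} ∘ η_X`. -/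
theorem opmonoidal_monad_gives_skew_left_warping (T : V ⥤ V)
    (μ : ∀ X : V, T.obj (T.obj X) ⟶ T.obj X) (η : ∀ X : V, X ⟶ T.obj X)
    (ψ : ∀ X Y : V, T.obj (X ⊗ Y) ⟶ T.obj X ⊗ T.obj Y) (ψ₀ : T.obj (𝟙_ V) ⟶ 𝟙_ V)
    (h : IsOpmonoidalMonad T μ η ψ ψ₀) :
    IsSkewLeftWarping T (𝟙_ V)
      (fun X Y => ψ (T.obj X) Y ≫ (μ X ▷ T.obj Y))
      ψ₀
      (fun X => η X ≫ (ρ_ (T.obj X)).inv) := by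
  obtain ⟨μnat, ηnat, massoc, munitl, munitr, ψnat, coassoc, counitl, counitr,
    μop, μop0, ηop, ηop0⟩ := h
  have ψnatR : ∀ {W W' : V} (f : W ⟶ W') (Y : V),
      T.map (f ▷ Y) ≫ ψ W' Y = ψ W Y ≫ (T.map f ▷ T.obj Y) := by
    intro W W' f Y
    simpa using ψnat W W' Y Y f (𝟙 Y)
  have ψnatL : ∀ (W : V) {Y Y' : V} (g : Y ⟶ Y'),
      T.map (W ◁ g) ≫ ψ W Y' = ψ W Y ≫ (T.obj W ◁ T.map g) := by
    intro W Y Y' g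
    simpa using ψnat W W Y Y' (𝟙 W) g
  refine ⟨?_, ?_, ?_, ?_, ?_, ?_, ?_⟩
  · -- naturality of v
    intro X X' Y Y' f g
    rw [reassoc_of% (ψnat _ _ _ _ (T.map f) g)]
    simp only [MonoidalCategory.tensorHom_def]
    rw [Category.assoc, whisker_exchange, ← comp_whiskerRight_assoc, μnat,
      comp_whiskerRight_assoc]
    simp
  · -- naturality of k
    intro X X' f
    simp [reassoc_of% (ηnat _ _ f)]
  · -- (W1)
    intro X Y Z
    simp only [comp_whiskerRight, MonoidalCategory.whiskerLeft_comp, Functor.map_comp,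
      Category.assoc]
    -- LHS: ψ ≫ μ▷ ≫ ψ▷ ≫ (μ▷TY)▷ ≫ α
    slice_lhs 2 3 => rw [← comp_whiskerRight, ← μop]
    simp only [comp_whiskerRight, Category.assoc]
    slice_lhs 1 2 => rw [← ψnatR]
    -- combine the μ-whiskers
    slice_lhs 4 5 =>
      rw [← comp_whiskerRight, MonoidalCategory.tensorHom_def, Category.assoc, whisker_exchange,
        ← Category.assoc, ← comp_whiskerRight, massoc]
      simp only [comp_whiskerRight, Category.assoc]
    simp only [Category.assoc]
    -- move the associator left
    slice_lhs 6 7 => rw [associator_naturality_middle]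
    slice_lhs 5 6 => rw [associator_naturality_left]
    slice_lhs 4 5 => rw [associator_naturality_left]
    -- coassociativity
    slice_lhs 2 4 => rw [← coassoc]
    simp only [Category.assoc]
    -- exchange ◁ψ past the μ-whiskers
    slice_lhs 4 5 => rw [whisker_exchange]
    slice_lhs 5 6 => rw [whisker_exchange]
    -- now transform the RHS
    slice_rhs 2 3 => rw [← T.map_comp, associator_naturality_left, T.map_comp]
    slice_rhs 3 4 => rw [ψnatR]
    simp only [Category.assoc]
  · -- (W2)
    intro Y
    slice_lhs 2 3 => rw [← comp_whiskerRight, ← μop0, comp_whiskerRight]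
    slice_lhs 1 2 => rw [← ψnatR]
    slice_lhs 2 4 => rw [counitl]
  · -- (W3)
    intro X
    have hc : ψ (T.obj X) (𝟙_ V) ≫ (T.obj (T.obj X) ◁ ψ₀) =
        T.map (ρ_ (T.obj X)).hom ≫ (ρ_ (T.obj (T.obj X))).inv := by
      rw [← counitr (T.obj X)]
      simp
    simp only [Functor.map_comp, Category.assoc]
    slice_lhs 4 5 => rw [← whisker_exchange]
    slice_lhs 3 4 => rw [hc]
    slice_lhs 2 3 => rw [← T.map_comp, Iso.inv_hom_id, T.map_id]
    simp only [Category.id_comp, Category.assoc]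
    rw [← rightUnitor_inv_naturality, reassoc_of% (munitr X)]
  · -- (W4)
    intro X Y
    simp only [comp_whiskerRight, Category.assoc]
    slice_lhs 2 3 => rw [← rightUnitor_inv_naturality]
    slice_lhs 3 4 => rw [← rightUnitor_inv_naturality]
    slice_lhs 1 2 => rw [ηop]
    rw [MonoidalCategory.tensorHom_def]
    slice_lhs 2 3 => rw [whisker_exchange]
    slice_lhs 1 2 => rw [← comp_whiskerRight, munitl]
    simp
  · -- (W5)
    slice_lhs 2 3 => rw [← rightUnitor_inv_naturality]
    slice_lhs 1 2 => rw [ηop0]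
    simp [unitors_equal]
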